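/- The ax+b-group ℚ ⋊ ℚ₊^× over the rationals is the enveloping group of ℤ ⋊ ℕ^×: the natural embedding ι : ℤ ⋊ ℕ^× → ℚ ⋊ ℚ₊^×, (n,m) ↦ (n,m), is an injective semigroup homomorphism, and every element of ℚ ⋊ ℚ₊^× can be written as ι(p)⁻¹ · ι(q) for some p, q ∈ ℤ ⋊ ℕ^×. -/

import Mathlib

/-- Multiplication in the `ax+b`-group `ℚ ⋊ ℚ₊^×`: `(a,b)(c,d) = (a + bc, bd)`. -/
def ratAffMul (x y : ℚ × ℚ) : ℚ × ℚ := (x.1 + x.2 * y.1, x.2 * y.2)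

/-- Inversion in the `ax+b`-group `ℚ ⋊ ℚ₊^×`: `(a,b)⁻¹ = (−b⁻¹a, b⁻¹)`. -/
def ratAffInv (x : ℚ × ℚ) : ℚ × ℚ := (-(x.2⁻¹ * x.1), x.2⁻¹)

/-- Multiplication in the semidirect product `ℤ ⋊ ℕ^×`. -/
def intSdMul (x y : ℤ × ℕ) : ℤ × ℕ := (x.1 + (x.2 : ℤ) * y.1, x.2 * y.2)

/-- The natural embedding of `ℤ ⋊ ℕ^×` into `ℚ ⋊ ℚ₊^×`. -/
def iotaZN (x : ℤ × ℕ) : ℚ × ℚ := ((x.1 : ℚ), (x.2 : ℚ))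

/-- `ℚ ⋊ ℚ₊^×` is the enveloping group of `ℤ ⋊ ℕ^×`: `ι` is an injective
semigroup homomorphism, and every group element is `ι(p)⁻¹ ι(q)`. -/
theorem stmt_9 :
    Function.Injective iotaZN ∧
    (∀ x y : ℤ × ℕ, 0 < x.2 → 0 < y.2 →
      iotaZN (intSdMul x y) = ratAffMul (iotaZN x) (iotaZN y)) ∧
    (∀ g : ℚ × ℚ, 0 < g.2 → ∃ p q : ℤ × ℕ, 0 < p.2 ∧ 0 < q.2 ∧
      ratAffMul (ratAffInv (iotaZN p)) (iotaZN q) = g) := by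
  refine ⟨?_, ?_, ?_⟩
  · intro x y h
    have h1 : (x.1 : ℚ) = (y.1 : ℚ) := congrArg Prod.fst h
    have h2 : (x.2 : ℚ) = (y.2 : ℚ) := congrArg Prod.snd h
    have e1 : x.1 = y.1 := by exact_mod_cast h1
    have e2 : x.2 = y.2 := by exact_mod_cast h2
    exact Prod.ext e1 e2
  · intro x y _ _
    simp only [iotaZN, intSdMul, ratAffMul]
    push_cast
    rfl
  · rintro ⟨a, b⟩ hg
    simp only at hg
    have hb : 0 < b.num := Rat.num_pos.mpr hg
    refine ⟨(0, a.den * b.den), (a.num * b.den, b.num.toNat * a.den), ?_, ?_, ?_⟩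
    · positivity
    · have h1 : 0 < b.num.toNat := by omega
      have := a.pos
      positivity
    · have had0 : (a.den : ℚ) ≠ 0 := by exact_mod_cast a.den_nz
      have hbd0 : (b.den : ℚ) ≠ 0 := by exact_mod_cast b.den_nz
      have ha' : (a.num : ℚ) = a * a.den := (div_eq_iff had0).mp (Rat.num_div_den a)
      have hb' : (b.num : ℚ) = b * b.den := (div_eq_iff hbd0).mp (Rat.num_div_den b)
      have hbt : ((b.num.toNat : ℕ) : ℚ) = (b.num : ℚ) := by
        exact_mod_cast Int.toNat_of_nonneg hb.le
      have had : (a.den : ℚ) ≠ 0 := by exact_mod_cast a.den_nz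
      have hbd : (b.den : ℚ) ≠ 0 := by exact_mod_cast b.den_nz
      simp only [ratAffMul, ratAffInv, iotaZN]
      push_cast [Int.toNat_of_nonneg hb.le]
      refine Prod.ext ?_ ?_
      · field_simp
        linear_combination (b.den : ℚ) * ha'
      · field_simp
        linear_combination hb' + hbt
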